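/- Let n ≥ 2 be an integer and let S be a sequence over the cyclic group C_n of length 3n − 1. Then S has two disjoint n-product-one subsequences, i.e., there exist sub-multisets T₁ and T₂ of S with T₁·T₂ a sub-multiset of S, |T₁| = |T₂| = n, and σ(T₁) = σ(T₂) = 1. In particular, S has a 2n-product-one subsequence. -/
import Mathlib

/-- EGZ for a cyclic group, multiplicative form. -/
lemma egz_mul {G : Type*} [CommGroup G] [Fintype G] {n : ℕ}
    (e : Multiplicative (ZMod n) ≃* G)
    (S : Multiset G) (hS : 2 * n - 1 ≤ Multiset.card S) :
    ∃ T ≤ S, Multiset.card T = n ∧ T.prod = 1 := by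
  set f : G → ZMod n := fun g => Multiplicative.toAdd (e.symm g) with hf
  obtain ⟨t, hts, htcard, htsum⟩ := ZMod.erdos_ginzburg_ziv_multiset (S.map f)
    (by simpa using hS)
  set finv : ZMod n → G := fun x => e (Multiplicative.ofAdd x) with hfinv
  refine ⟨t.map finv, ?_, by simpa using htcard, ?_⟩
  · have h1 : (S.map f).map finv = S := by
      rw [Multiset.map_map]
      have : finv ∘ f = id := by
        funext g
        simp [hf, hfinv]
      rw [this, Multiset.map_id]
    calc (t.map finv) ≤ (S.map f).map finv := Multiset.map_le_map hts
      _ = S := h1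
  · have : t.map finv = (t.map Multiplicative.ofAdd).map e := by
      rw [Multiset.map_map]; rfl
    rw [this, ← map_multiset_prod]
    have hsum : (t.map Multiplicative.ofAdd).prod = Multiplicative.ofAdd t.sum := by
      induction t using Multiset.induction with
      | empty => simp
      | cons a s ih => simp [ih, ofAdd_add]
    simp [hsum, htsum]

theorem stmt12 {G : Type*} [CommGroup G] [Fintype G] (n : ℕ) (hn : 2 ≤ n)
    (hcyc : IsCyclic G) (hcard : Fintype.card G = n)
    (S : Multiset G) (hS : Multiset.card S = 3 * n - 1) :
    (∃ T₁ T₂ : Multiset G, T₁ + T₂ ≤ S ∧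
        Multiset.card T₁ = n ∧ Multiset.card T₂ = n ∧ T₁.prod = 1 ∧ T₂.prod = 1) ∧
    (∃ T ≤ S, Multiset.card T = 2 * n ∧ T.prod = 1) := by
  classical
  have hn' : n = Nat.card G := by rw [Nat.card_eq_fintype_card, hcard]
  subst hn'
  have e := zmodCyclicMulEquiv hcyc
  obtain ⟨T₁, hT₁S, hT₁card, hT₁prod⟩ := egz_mul e S (by omega)
  have hsub : Multiset.card (S - T₁) = 2 * Nat.card G - 1 := by
    rw [Multiset.card_sub hT₁S, hS, hT₁card]; omega
  obtain ⟨T₂, hT₂S, hT₂card, hT₂prod⟩ := egz_mul e (S - T₁) (by omega)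
  have hadd : T₁ + T₂ ≤ S := by
    rw [Multiset.le_iff_count] at *
    intro a
    have h1 := hT₁S a
    have h2 := hT₂S a
    rw [Multiset.count_sub] at h2
    simp only [Multiset.count_add]
    omega
  refine ⟨⟨T₁, T₂, hadd, hT₁card, hT₂card, hT₁prod, hT₂prod⟩,
    ⟨T₁ + T₂, hadd, ?_, by rw [Multiset.prod_add, hT₁prod, hT₂prod, one_mul]⟩⟩
  rw [Multiset.card_add, hT₁card, hT₂card]; omega
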